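/- Let n ≥ 2, let H be a proper nonzero linear subspace of ℝⁿ and let ♢_H be an H-symmetrization on 𝒦ⁿ which is monotone, H⊥-translation invariant on H-symmetric sets, and invariant on H-symmetric sets. Then for every K ∈ 𝒦ⁿ one has F_H K ⊆ ♢_H K ⊆ M_H K, where F_H and M_H are the fiber and Minkowski symmetrizations with respect to H. -/

import Mathlib

open Filter Topology Metric Set Pointwise MeasureTheory

noncomputable section

abbrev Euc (n : ℕ) := EuclideanSpace ℝ (Fin n)

def IsConvexBody {n : ℕ} (K : Set (Euc n)) : Prop :=
  K.Nonempty ∧ IsCompact K ∧ Convex ℝ K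

def reflMap {n : ℕ} (H : Submodule ℝ (Euc n)) : Euc n → Euc n :=
  (Submodule.reflection H : Euc n ≃ₗᵢ[ℝ] Euc n)

/-- Minkowski symmetrization with respect to the subspace `H`. -/
def mink {n : ℕ} (H : Submodule ℝ (Euc n)) (C : Set (Euc n)) : Set (Euc n) :=
  (2⁻¹ : ℝ) • (C + reflMap H '' C)

/-- Fiber symmetrization with respect to the subspace `H`. -/
def fiber {n : ℕ} (H : Submodule ℝ (Euc n)) (K : Set (Euc n)) : Set (Euc n) :=
  ⋃ x ∈ (H : Set (Euc n)),
    (2⁻¹ : ℝ) • ((K ∩ ((Hᗮ : Set (Euc n)) + {x})) +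
      reflMap H '' (K ∩ ((Hᗮ : Set (Euc n)) + {x})))


open RealInnerProductSpace

variable {n : ℕ} (H : Submodule ℝ (Euc n))

lemma reflMap_refl (x : Euc n) : reflMap H (reflMap H x) = x := Submodule.reflection_reflection H x

lemma reflMap_mem_H {x : Euc n} (hx : x ∈ H) : reflMap H x = x :=
  Submodule.reflection_mem_subspace_eq_self hx

lemma reflMap_mem_orth {x : Euc n} (hx : x ∈ Hᗮ) : reflMap H x = -x :=
  Submodule.reflection_mem_subspace_orthogonalComplement_eq_neg hx

lemma reflMap_continuous : Continuous (reflMap H) := (Submodule.reflection H).continuous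

lemma reflMap_add (x y : Euc n) : reflMap H (x + y) = reflMap H x + reflMap H y :=
  map_add (Submodule.reflection H) x y

lemma reflMap_smul (c : ℝ) (x : Euc n) : reflMap H (c • x) = c • reflMap H x :=
  map_smul (Submodule.reflection H) c x

lemma reflMap_norm (x : Euc n) : ‖reflMap H x‖ = ‖x‖ := (Submodule.reflection H).norm_map x

lemma inner_reflMap (u w : Euc n) : ⟪u, reflMap H w⟫ = ⟪reflMap H u, w⟫ := by
  simp only [reflMap]
  calc ⟪u, (Submodule.reflection H) w⟫ = ⟪(Submodule.reflection H) ((Submodule.reflection H) u), (Submodule.reflection H) w⟫ := by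
        rw [Submodule.reflection_reflection]
    _ = ⟪(Submodule.reflection H) u, w⟫ := (Submodule.reflection H).inner_map_map _ _

lemma isCompact_segment' (a b : Euc n) : IsCompact (segment ℝ a b) := by
  rw [segment_eq_image ℝ a b]
  exact isCompact_Icc.image (by continuity)



lemma lower {n : ℕ}
    (H : Submodule ℝ (Euc n))
    (D : Set (Euc n) → Set (Euc n))
    (hmono : ∀ ⦃K L⦄, IsConvexBody K → IsConvexBody L → K ⊆ L → D K ⊆ D L)
    (htrans : ∀ ⦃K⦄, IsConvexBody K → reflMap H '' K = K → ∀ x ∈ Hᗮ, D (K + {x}) = K)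
    (K : Set (Euc n)) (hK : IsConvexBody K) :
    fiber H K ⊆ D K := by
  intro z hz
  simp only [fiber, mem_iUnion] at hz
  obtain ⟨x, hxH, hz⟩ := hz
  rw [Set.mem_smul_set] at hz
  obtain ⟨s, hs, rfl⟩ := hz
  rw [Set.mem_add] at hs
  obtain ⟨a, ha, rb, hrb, rfl⟩ := hs
  obtain ⟨b, hb, rfl⟩ := hrb
  obtain ⟨haK, haF⟩ := ha
  obtain ⟨hbK, hbF⟩ := hb
  rw [Set.mem_add] at haF hbF
  obtain ⟨p, hp, y1, hy1, hpa⟩ := haF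
  obtain rfl : x = y1 := (Set.mem_singleton_iff.mp hy1).symm
  obtain ⟨q, hq, y2, hy2, hqb⟩ := hbF
  obtain rfl : x = y2 := (Set.mem_singleton_iff.mp hy2).symm
  set z := (2⁻¹ : ℝ) • (a + reflMap H b) with hzdef
  set w := (2⁻¹ : ℝ) • (p + q) with hwdef
  have hw : w ∈ Hᗮ := Hᗮ.smul_mem _ (Hᗮ.add_mem hp hq)
  have hra : reflMap H a = -p + x := by
    rw [← hpa, reflMap_add, reflMap_mem_orth H hp, reflMap_mem_H H hxH]
  have hrb : reflMap H b = -q + x := by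
    rw [← hqb, reflMap_add, reflMap_mem_orth H hq, reflMap_mem_H H hxH]
  have hrz : reflMap H z = (2⁻¹ : ℝ) • (reflMap H a + b) := by
    rw [hzdef, reflMap_smul, reflMap_add, reflMap_refl]
  have hzw : z + w = a := by
    rw [hzdef, hwdef, hrb, ← hpa]; module
  have hrzw : reflMap H z + w = b := by
    rw [hrz, hra, hwdef, ← hqb]; module
  set S := segment ℝ z (reflMap H z) with hSdef
  have hSsymm : reflMap H '' S = S := by
    have him := image_segment ℝ ((Submodule.reflection H).toLinearEquiv.toLinearMap.toAffineMap) z (reflMap H z)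
    have : reflMap H '' S = segment ℝ (reflMap H z) (reflMap H (reflMap H z)) := him
    rw [this, reflMap_refl, segment_symm]
  have hSbody : IsConvexBody S := ⟨⟨z, left_mem_segment ℝ _ _⟩, isCompact_segment' z _, convex_segment _ _⟩
  have hSw : S + {w} = segment ℝ a b := by
    rw [hSdef, Set.add_singleton]
    have him := image_segment ℝ (AffineMap.mk (fun y : Euc n => y + w) LinearMap.id
      (fun p v => by simp only [vadd_eq_add, LinearMap.id_coe, id_eq]; module)) z (reflMap H z)
    simp only [AffineMap.coe_mk] at him
    rw [him, hzw, hrzw]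
  have habK : segment ℝ a b ⊆ K := hK.2.2.segment_subset haK hbK
  have habBody : IsConvexBody (segment ℝ a b) :=
    ⟨⟨a, left_mem_segment ℝ _ _⟩, isCompact_segment' a b, convex_segment _ _⟩
  have hDab : D (segment ℝ a b) = S := by
    rw [← hSw]; exact htrans hSbody hSsymm w hw
  have : z ∈ D (segment ℝ a b) := by rw [hDab]; exact left_mem_segment ℝ _ _
  exact hmono habBody hK habK this

open RealInnerProductSpace in
lemma upper {n : ℕ}
    (H : Submodule ℝ (Euc n))
    (D : Set (Euc n) → Set (Euc n))
    (hmono : ∀ ⦃K L⦄, IsConvexBody K → IsConvexBody L → K ⊆ L → D K ⊆ D L)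
    (htrans : ∀ ⦃K⦄, IsConvexBody K → reflMap H '' K = K → ∀ x ∈ Hᗮ, D (K + {x}) = K)
    (K : Set (Euc n)) (hK : IsConvexBody K) :
    D K ⊆ mink H K := by
  intro y hy
  by_contra hyM
  obtain ⟨hKne, hKcomp, hKconv⟩ := hK
  -- mink H K is a closed convex set
  have hMconv : Convex ℝ (mink H K) :=
    (hKconv.add (hKconv.is_linear_image ⟨reflMap_add H, reflMap_smul H⟩)).smul _
  have hMcomp : IsCompact (mink H K) :=
    IsCompact.smul _ (hKcomp.add (hKcomp.image (reflMap_continuous H)))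
  obtain ⟨f, r, hfM, hfy⟩ := geometric_hahn_banach_closed_point hMconv hMcomp.isClosed hyM
  set u := (InnerProductSpace.toDual ℝ (Euc n)).symm f with hudef
  have hfu : ∀ w, f w = ⟪u, w⟫ := by
    intro w
    conv_lhs => rw [← (InnerProductSpace.toDual ℝ (Euc n)).apply_symm_apply f]
    rw [InnerProductSpace.toDual_apply_apply]
  set g : Euc n → ℝ := fun w => f (reflMap H w) with hgdef
  have hgcont : Continuous g := f.continuous.comp (reflMap_continuous H)
  have hginner : ∀ w, g w = ⟪reflMap H u, w⟫ := by
    intro w; rw [hgdef]; simp only; rw [hfu, inner_reflMap]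
  have hgR : ∀ w, g (reflMap H w) = f w := by
    intro w; rw [hgdef]; simp only; rw [reflMap_refl]
  -- maxima of f and g on K
  obtain ⟨a, haK, ha⟩ := hKcomp.exists_isMaxOn hKne f.continuous.continuousOn
  obtain ⟨a', ha'K, ha'⟩ := hKcomp.exists_isMaxOn hKne hgcont.continuousOn
  rw [isMaxOn_iff] at ha ha'
  set h1 := f a with h1def
  set h2 := g a' with h2def
  set m := (h1 + h2) / 2 with hmdef
  set t := (h1 - h2) / 2 with htdef
  -- the translation vector
  have hxb : ∃ xb ∈ Hᗮ, ⟪u, xb⟫ = t ∧ ⟪reflMap H u, xb⟫ = -t := by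
    set P := (H.starProjection u) with hPdef
    set v := u - P with hvdef
    have hvmem : v ∈ Hᗮ := H.sub_starProjection_mem_orthogonal u
    have hPmem : P ∈ H := H.starProjection_apply_mem u
    have huPv : u = P + v := by rw [hvdef]; abel
    have hRu : reflMap H u = P - v := by
      simp only [reflMap, Submodule.reflection_apply, ← hPdef]
      rw [two_smul, huPv]; abel
    by_cases hv : v = 0
    · have hRuu : reflMap H u = u := by
        rw [hRu, hv, sub_zero, huPv, hv, add_zero]
      have hgf : ∀ w, g w = f w := fun w => by rw [hginner, hRuu, ← hfu]
      have h12 : h1 = h2 := by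
        have l1 : h1 ≤ h2 := by
          rw [h1def, ← hgf a]; exact ha' a haK
        have l2 : h2 ≤ h1 := by
          rw [h2def, hgf a']; exact ha a' ha'K
        linarith
      have ht0 : t = 0 := by rw [htdef, h12]; ring
      exact ⟨0, Hᗮ.zero_mem, by simp [ht0], by simp [ht0]⟩
    · have hvn : (‖v‖ : ℝ) ^ 2 ≠ 0 := pow_ne_zero 2 (norm_ne_zero_iff.mpr hv)
      have huv : ⟪u, v⟫ = ‖v‖ ^ 2 := by
        rw [huPv, inner_add_left, Submodule.inner_right_of_mem_orthogonal hPmem hvmem,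
          real_inner_self_eq_norm_sq, zero_add]
      have hRuv : ⟪reflMap H u, v⟫ = -(‖v‖ ^ 2) := by
        rw [hRu, inner_sub_left, Submodule.inner_right_of_mem_orthogonal hPmem hvmem,
          real_inner_self_eq_norm_sq, zero_sub]
      refine ⟨(t / ‖v‖ ^ 2) • v, Hᗮ.smul_mem _ hvmem, ?_, ?_⟩
      · rw [real_inner_smul_right, huv, div_mul_cancel₀ _ hvn]
      · rw [real_inner_smul_right, hRuv]
        field_simp
  obtain ⟨xb, hxbmem, hxbu, hxbRu⟩ := hxb
  -- the symmetric point q₀ and radius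
  set z₀ := (2⁻¹ : ℝ) • (a + reflMap H a') with hz₀def
  set q₀ := (2⁻¹ : ℝ) • (z₀ + reflMap H z₀) with hq₀def
  obtain ⟨RK, hRK⟩ := hKcomp.isBounded.subset_closedBall 0
  set ρ := max (RK + ‖xb‖) ‖q₀‖ with hρdef
  -- key values
  have hfz₀ : f z₀ = m := by
    have e : f z₀ = 2⁻¹ * (f a + f (reflMap H a')) := by
      rw [hz₀def, _root_.map_smul, _root_.map_add, smul_eq_mul]
    have e2 : f (reflMap H a') = g a' := rfl
    rw [e, e2, ← h1def, ← h2def, hmdef]; ring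
  have hgz₀ : g z₀ ≤ m := by
    have e : g z₀ = 2⁻¹ * (f (reflMap H a) + f a') := by
      show f (reflMap H z₀) = _
      rw [hz₀def, reflMap_smul, reflMap_add, reflMap_refl, _root_.map_smul, _root_.map_add,
        smul_eq_mul]
    have l1 : f (reflMap H a) ≤ h2 := ha' a haK
    have l2 : f a' ≤ h1 := ha a' ha'K
    rw [e, hmdef]; linarith
  have hfRz₀ : f (reflMap H z₀) = g z₀ := rfl
  have hfq₀ : f q₀ ≤ m := by
    have e : f q₀ = 2⁻¹ * (f z₀ + f (reflMap H z₀)) := by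
      rw [hq₀def, _root_.map_smul, _root_.map_add, smul_eq_mul]
    rw [e, hfRz₀, hfz₀]; linarith
  have hgq₀ : g q₀ ≤ m := by
    have e : g q₀ = 2⁻¹ * (f (reflMap H z₀) + f z₀) := by
      show f (reflMap H q₀) = _
      rw [hq₀def, reflMap_smul, reflMap_add, reflMap_refl, _root_.map_smul, _root_.map_add,
        smul_eq_mul]
    rw [e, hfRz₀, hfz₀]; linarith
  -- the set C
  set C := ({w : Euc n | f w ≤ m} ∩ {w : Euc n | g w ≤ m}) ∩ closedBall (0 : Euc n) ρ with hCdef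
  have hq₀C : q₀ ∈ C := by
    refine ⟨⟨hfq₀, hgq₀⟩, ?_⟩
    rw [mem_closedBall_zero_iff]
    exact le_max_right _ _
  have hCconv : Convex ℝ C :=
    (((convex_halfSpace_le ⟨f.map_add, f.map_smul⟩ m).inter
      (convex_halfSpace_le ⟨fun p q => by simp only [hgdef, reflMap_add H, _root_.map_add],
        fun c p => by simp only [hgdef, reflMap_smul H, _root_.map_smul, smul_eq_mul]⟩ m))).inter
      (convex_closedBall 0 ρ)
  have hCcomp : IsCompact C := by
    apply IsCompact.inter_left (isCompact_closedBall 0 ρ)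
    exact (isClosed_le f.continuous continuous_const).inter
      (isClosed_le hgcont continuous_const)
  have hRC : ∀ w ∈ C, reflMap H w ∈ C := by
    rintro w ⟨⟨hf1, hg1⟩, hb1⟩
    refine ⟨⟨?_, ?_⟩, ?_⟩
    · show f (reflMap H w) ≤ m; exact hg1
    · show g (reflMap H w) ≤ m; rw [hgR]; exact hf1
    · rw [mem_closedBall_zero_iff] at hb1 ⊢
      rw [reflMap_norm]; exact hb1
  have hCsymm : reflMap H '' C = C := by
    apply Set.Subset.antisymm
    · rintro _ ⟨c, hc, rfl⟩; exact hRC c hc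
    · intro w hw
      exact ⟨reflMap H w, hRC w hw, reflMap_refl H w⟩
  have hCbody : IsConvexBody C := ⟨⟨q₀, hq₀C⟩, hCcomp, hCconv⟩
  have hCxbody : IsConvexBody (C + {xb}) :=
    ⟨⟨q₀ + xb, Set.add_mem_add hq₀C rfl⟩, hCcomp.add isCompact_singleton,
      hCconv.add (convex_singleton xb)⟩
  -- K ⊆ C + {xb}
  have hKsub : K ⊆ C + {xb} := by
    intro k hk
    rw [Set.mem_add]
    refine ⟨k - xb, ⟨⟨?_, ?_⟩, ?_⟩, xb, rfl, sub_add_cancel k xb⟩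
    · show f (k - xb) ≤ m
      rw [_root_.map_sub]
      have l1 : f k ≤ h1 := ha k hk
      have l2 : f xb = t := by rw [hfu]; exact hxbu
      rw [l2, hmdef, htdef]; linarith
    · show g (k - xb) ≤ m
      have e : g (k - xb) = g k - g xb := by
        simp only [hgdef, _root_.map_sub]
        rw [show reflMap H (k - xb) = reflMap H k - reflMap H xb from _root_.map_sub (Submodule.reflection H) k xb,
          _root_.map_sub]
      rw [e]
      have l1 : g k ≤ h2 := ha' k hk
      have l2 : g xb = -t := by rw [hginner]; exact hxbRu
      rw [l2, hmdef, htdef]; linarith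
    · rw [mem_closedBall_zero_iff]
      have l1 : ‖k‖ ≤ RK := by
        have := hRK hk; rwa [mem_closedBall_zero_iff] at this
      calc ‖k - xb‖ ≤ ‖k‖ + ‖xb‖ := norm_sub_le k xb
        _ ≤ RK + ‖xb‖ := by linarith
        _ ≤ ρ := le_max_left _ _
  -- conclude
  have hDC : D K ⊆ C := by
    have h1' := hmono ⟨hKne, hKcomp, hKconv⟩ hCxbody hKsub
    rwa [htrans hCbody hCsymm xb hxbmem] at h1'
  have hyC := hDC hy
  have hfyC : f y ≤ m := hyC.1.1
  -- z₀ ∈ mink H K with f z₀ = m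
  have hz₀M : z₀ ∈ mink H K := by
    rw [mink]
    exact Set.smul_mem_smul_set (Set.add_mem_add haK (Set.mem_image_of_mem _ ha'K))
  have := hfM z₀ hz₀M
  rw [hfz₀] at this
  linarith

/-- Any `H`-symmetrization on the convex bodies which is monotone, `H^⊥`-translation
invariant on `H`-symmetric sets and invariant on `H`-symmetric sets lies between the fiber
and the Minkowski symmetrizations. -/
theorem stmt9 {n : ℕ} (hn : 2 ≤ n)
    (H : Submodule ℝ (Euc n)) (hb : H ≠ ⊥) (ht : H ≠ ⊤)
    (D : Set (Euc n) → Set (Euc n))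
    (hbody : ∀ ⦃K⦄, IsConvexBody K → IsConvexBody (D K))
    (hsymm : ∀ ⦃K⦄, IsConvexBody K → reflMap H '' D K = D K)
    (hmono : ∀ ⦃K L⦄, IsConvexBody K → IsConvexBody L → K ⊆ L → D K ⊆ D L)
    (htrans : ∀ ⦃K⦄, IsConvexBody K → reflMap H '' K = K → ∀ x ∈ Hᗮ, D (K + {x}) = K)
    (hinv : ∀ ⦃K⦄, IsConvexBody K → reflMap H '' K = K → D K = K)
    (K : Set (Euc n)) (hK : IsConvexBody K) :
    fiber H K ⊆ D K ∧ D K ⊆ mink H K := by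
  exact ⟨lower H D hmono htrans K hK, upper H D hmono htrans K hK⟩
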